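/- For m ≥ 1 and j ≥ 1, g_{k,r}(m+1, overline(kj+r)) = q^{kj+r} · ( g_{k,r}(m, overline(k(j-1)+r)) + ∑_{s=-k+r+1}^{r} g_{k,r}(m, kj+s) ). -/

import Mathlib

noncomputable section

/-- The q-Pochhammer symbol (q^t; q^t)_n as a polynomial in q. -/
def qpoch (t n : ℕ) : Polynomial ℚ :=
  ∏ i ∈ Finset.range n, (1 - Polynomial.X ^ (t * (i + 1)))

/-- The Gaussian binomial coefficient [A choose B] in base q^t:
(q^t;q^t)_A / ((q^t;q^t)_B (q^t;q^t)_{A-B}) when 0 ≤ B ≤ A, and 0 otherwise. -/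
def gauss (t : ℕ) (A B : ℤ) : Polynomial ℚ :=
  if 0 ≤ B ∧ B ≤ A then
    qpoch t A.toNat / (qpoch t B.toNat * qpoch t (A - B).toNat)
  else 0
/-- Formal power series in three variables x/μ = X 0, z/ν = X 1, q = X 2. -/
abbrev S3 := MvPowerSeries (Fin 3) ℚ

/-- Product topology with discrete coefficients, so that infinite sums and
products of power series are meaningful. -/
instance : TopologicalSpace S3 :=
  @Pi.topologicalSpace ((Fin 3) →₀ ℕ) (fun _ => ℚ) (fun _ => ⊥)

/-- Interpret a polynomial in q as a power series in the variable X 2. -/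
def pq (p : Polynomial ℚ) : S3 := Polynomial.aeval (MvPowerSeries.X 2 : S3) p
/-- Linear order on (possibly overlined) parts: 1 < 1̄ < 2 < 2̄ < ⋯ ;
ord (a, false) = 2a, ord (a, true) = 2a + 1. -/
def ord (p : ℕ × Bool) : ℕ := 2 * p.1 + (if p.2 then 1 else 0)

/-- An overpartition as a non-increasing list of (value, overlined?) pairs:
parts positive, non-increasing in the above order (so an overlined part comes
before the equal non-overlined parts), and each value overlined at most once. -/
def IsOverList (l : List (ℕ × Bool)) : Prop :=
  (∀ p ∈ l, 0 < p.1) ∧ l.Pairwise (fun p q => ord q ≤ ord p) ∧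
    ∀ a : ℕ, l.count (a, true) ≤ 1

/-- Number of overlined parts of an overpartition list. -/
def olL (l : List (ℕ × Bool)) : ℕ := (l.filter (fun p => p.2 = true)).length

/-- Weight of an overpartition list. -/
def wtL (l : List (ℕ × Bool)) : ℕ := (l.map Prod.fst).sum
/-- The basis set B_{k,r}(m): overpartitions with m parts, only parts ≡ r
(mod k) overlined, last part ≤ r̄, and for consecutive parts: whenever
λ_{i+1} ≤ kj + r (in the order 1 < 1̄ < 2 < 2̄ < ⋯, for any j ≥ 0) one has
λ_i ≤ overline(kj + r).  (For the unique j ≥ 1 with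
overline(k(j-1)+r) ≤ λ_{i+1} ≤ kj+r this is the binding condition
λ_i ≤ overline(kj+r); the conditions for larger j are implied, and the j = 0
case handles λ_{i+1} ≤ r.) -/
def IsBkr (k r m : ℕ) (l : List (ℕ × Bool)) : Prop :=
  l.length = m ∧ IsOverList l ∧ (∀ p ∈ l, p.2 = true → p.1 % k = r % k) ∧
    (∀ p, l.getLast? = some p → ord p ≤ 2 * r + 1) ∧
    l.Chain' (fun p q => ∀ j : ℕ, ord q ≤ 2 * (k * j + r) → ord p ≤ 2 * (k * j + r) + 1)
open MvPowerSeries in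
/-- g_{k,r}(m, p): the weight generating function (q = X 2) for overpartitions
in B_{k,r}(m) with largest part p (a pair (value, overlined?)). -/
def gkr (k r m : ℕ) (p : ℕ × Bool) : S3 :=
  ∑' l : {l : List (ℕ × Bool) // IsBkr k r m l ∧ l.head? = some p},
    (X 2 : S3) ^ wtL l.1

/-! ### Auxiliary topological infrastructure -/

open MvPowerSeries Finset

instance : T3Space S3 := by
  letI : TopologicalSpace ℚ := ⊥
  haveI : DiscreteTopology ℚ := ⟨rfl⟩
  exact inferInstanceAs (T3Space ((Fin 3 →₀ ℕ) → ℚ))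

instance : ContinuousAdd S3 := by
  letI : TopologicalSpace ℚ := ⊥
  haveI : DiscreteTopology ℚ := ⟨rfl⟩
  exact inferInstanceAs (ContinuousAdd ((Fin 3 →₀ ℕ) → ℚ))

instance : ContinuousMul S3 := by
  letI : TopologicalSpace ℚ := ⊥
  haveI : DiscreteTopology ℚ := ⟨rfl⟩
  constructor
  apply continuous_pi
  intro d
  have h : (fun p : S3 × S3 => (p.1 * p.2) d) =
      fun p : S3 × S3 => ∑ uv ∈ Finset.HasAntidiagonal.antidiagonal d, p.1 uv.1 * p.2 uv.2 := by
    funext p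
    exact MvPowerSeries.coeff_mul (R := ℚ) (n := d) (φ := p.1) (ψ := p.2)
  rw [h]
  exact continuous_finset_sum _ fun uv _ =>
    (((continuous_apply uv.1).comp continuous_fst).mul
      ((continuous_apply uv.2).comp continuous_snd))

instance : IsTopologicalSemiring S3 := ⟨⟩

lemma summable_X2pow {ι : Type*} (w : ι → ℕ) (hw : ∀ n, {i | w i = n}.Finite) :
    Summable (fun i => (X 2 : S3) ^ (w i)) := by
  letI : TopologicalSpace ℚ := ⊥
  haveI : DiscreteTopology ℚ := ⟨rfl⟩
  refine Pi.summable.mpr fun d => ?_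
  refine summable_of_ne_finset_zero (s := (hw (d 2)).toFinset) fun i hi => ?_
  have hne : w i ≠ d 2 := by simpa using hi
  have h : ((X 2 : S3) ^ (w i)) d = if d = Finsupp.single 2 (w i) then 1 else 0 :=
    MvPowerSeries.coeff_X_pow d 2 (w i)
  rw [h, if_neg]
  rintro rfl
  exact hne (by simp)

/-! ### Finiteness of fixed-weight families -/

lemma finite_aux (m n : ℕ) :
    {l : List (ℕ × Bool) | l.length = m ∧ ∀ p ∈ l, p.1 ≤ n}.Finite := by
  induction m with
  | zero =>
    refine (Set.finite_singleton ([] : List (ℕ × Bool))).subset ?_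
    intro l ⟨h1, _⟩
    simp [List.length_eq_zero_iff.mp h1]
  | succ m ih =>
    have hfin : ({p : ℕ × Bool | p.1 ≤ n}).Finite := by
      have h : {p : ℕ × Bool | p.1 ≤ n} = Set.Iic n ×ˢ (Set.univ : Set Bool) := by
        ext p; simp
      rw [h]
      exact (Set.finite_Iic n).prod Set.finite_univ
    refine ((hfin.prod ih).image (fun x : (ℕ × Bool) × List (ℕ × Bool) => x.1 :: x.2)).subset ?_
    rintro l ⟨h1, h2⟩
    cases l with
    | nil => simp at h1
    | cons a t =>
      refine ⟨(a, t), ⟨h2 a List.mem_cons_self, by simpa using h1,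
        fun p hp => h2 p (List.mem_cons_of_mem _ hp)⟩, rfl⟩

lemma finite_wt (m n : ℕ) :
    {l : List (ℕ × Bool) | l.length = m ∧ wtL l = n}.Finite := by
  refine (finite_aux m n).subset ?_
  rintro l ⟨h1, h2⟩
  refine ⟨h1, fun p hp => ?_⟩
  have hmem : p.1 ∈ l.map Prod.fst := List.mem_map_of_mem hp
  have h := List.single_le_sum (fun (x : ℕ) _ => Nat.zero_le x) _ hmem
  rw [← h2]
  exact h

/-! ### Combinatorial core -/

section Comb

lemma ord_true (n : ℕ) : ord (n, true) = 2 * n + 1 := by simp [ord]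
lemma ord_false (n : ℕ) : ord (n, false) = 2 * n := by simp [ord]

variable {k r m j : ℕ} (hr : 1 ≤ r) (hrk : r ≤ k) (hm : 1 ≤ m) (hj : 1 ≤ j)

/-- Admissible heads of the tail. -/
def Good (k r j : ℕ) (p : ℕ × Bool) : Prop :=
  p = (k * (j - 1) + r, true) ∨
    ∃ v, p = (v, false) ∧ k * (j - 1) + r + 1 ≤ v ∧ v ≤ k * j + r

lemma hbc (hj : 1 ≤ j) : k * (j - 1) + r + k = k * j + r := by
  have h : j - 1 + 1 = j := Nat.succ_pred_eq_of_pos hj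
  calc k * (j - 1) + r + k = k * (j - 1 + 1) + r := by ring
    _ = k * j + r := by rw [h]

set_option linter.unusedSectionVars false

include hr hrk hm hj in
lemma cons_mem {t : List (ℕ × Bool)} {p : ℕ × Bool}
    (ht : IsBkr k r m t) (hhd : t.head? = some p) (hp : Good k r j p) :
    IsBkr k r (m + 1) ((k * j + r, true) :: t) := by
  have hk : 1 ≤ k := hr.trans hrk
  have hbck : k * (j - 1) + r + k = k * j + r := hbc hj
  obtain ⟨hlen, ⟨hpos, hsort, hcount⟩, hmod, hlast, hchain⟩ := ht
  obtain ⟨a, t', rfl⟩ : ∃ a t', t = a :: t' := by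
    cases t with
    | nil => simp at hhd
    | cons a t' => exact ⟨a, t', rfl⟩
  have hap : p = a := by simpa using hhd.symm
  subst hap
  have hordp1 : 2 * (k * (j - 1) + r) + 1 ≤ ord p := by
    rcases hp with rfl | ⟨v, rfl, h1, h2⟩
    · rw [ord_true]
    · rw [ord_false]; omega
  have hordp2 : ord p ≤ 2 * (k * j + r) := by
    rcases hp with rfl | ⟨v, rfl, h1, h2⟩
    · rw [ord_true]; omega
    · rw [ord_false]; omega
  have hsort' := List.pairwise_cons.mp hsort
  have hle : ∀ q ∈ p :: t', ord q ≤ ord p := by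
    intro q hq
    rcases List.mem_cons.mp hq with rfl | hq
    · exact le_refl _
    · exact hsort'.1 q hq
  have hct : ((k * j + r, true) : ℕ × Bool) ∉ p :: t' := by
    intro hmem
    have h1 := hle _ hmem
    rw [ord_true] at h1
    omega
  refine ⟨by simp [← hlen], ⟨?_, ?_, ?_⟩, ?_, ?_, ?_⟩
  · intro q hq
    rcases List.mem_cons.mp hq with rfl | hq
    · show 0 < k * j + r; omega
    · exact hpos q hq
  · refine List.pairwise_cons.mpr ⟨fun q hq => ?_, hsort⟩
    have h1 := hle q hq
    rw [ord_true]
    omega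
  · intro a
    rw [List.count_cons]
    by_cases hac : a = k * j + r
    · subst hac
      have h0 : (p :: t').count ((k * j + r, true) : ℕ × Bool) = 0 :=
        List.count_eq_zero.mpr hct
      simp [h0]
    · have hac' : ¬ (k * j + r = a) := fun h => hac h.symm
      rw [if_neg (by simp [hac, hac'])]
      simpa using hcount a
  · intro q hq hq2
    rcases List.mem_cons.mp hq with rfl | hq
    · show (k * j + r) % k = r % k
      rw [Nat.mul_add_mod]
    · exact hmod q hq hq2
  · intro q hq
    rw [List.getLast?_cons_cons] at hq
    exact hlast q hq
  · refine List.isChain_cons.mpr ⟨?_, hchain⟩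
    intro q hq
    have hqp : p = q := by simpa using hq
    subst hqp
    intro j' hj'
    have hjj : j ≤ j' := by
      by_contra hlt
      push_neg at hlt
      have h1 : j' ≤ j - 1 := by omega
      have h2 : k * j' ≤ k * (j - 1) := Nat.mul_le_mul_left k h1
      omega
    have h2 : k * j ≤ k * j' := Nat.mul_le_mul_left k hjj
    rw [ord_true]
    omega

include hr hrk hm hj in
lemma mem_decomp {t : List (ℕ × Bool)}
    (hl : IsBkr k r (m + 1) ((k * j + r, true) :: t)) :
    ∃ p, t.head? = some p ∧ IsBkr k r m t ∧ Good k r j p := by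
  have hk : 1 ≤ k := hr.trans hrk
  have hbck : k * (j - 1) + r + k = k * j + r := hbc hj
  obtain ⟨hlen, ⟨hpos, hsort, hcount⟩, hmod, hlast, hchain⟩ := hl
  obtain ⟨a, t', rfl⟩ : ∃ a t', t = a :: t' := by
    cases t with
    | nil => simp at hlen; omega
    | cons a t' => exact ⟨a, t', rfl⟩
  have hsort' := List.pairwise_cons.mp hsort
  have htB : IsBkr k r m (a :: t') := by
    refine ⟨by simpa using hlen, ⟨?_, hsort'.2, ?_⟩, ?_, ?_, (List.isChain_cons.mp hchain).2⟩
    · exact fun q hq => hpos q (List.mem_cons_of_mem _ hq)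
    · intro x
      have h1 := hcount x
      rw [List.count_cons] at h1
      omega
    · exact fun q hq h2 => hmod q (List.mem_cons_of_mem _ hq) h2
    · intro q hq
      exact hlast q (by rw [List.getLast?_cons_cons]; exact hq)
  have hct : ((k * j + r, true) : ℕ × Bool) ∉ a :: t' := by
    intro hmem
    have h1 := hcount (k * j + r)
    rw [List.count_cons, if_pos (by simp)] at h1
    have h2 : 0 < (a :: t').count ((k * j + r, true) : ℕ × Bool) :=
      List.count_pos_iff.mpr hmem
    omega
  have hub : ord a ≤ 2 * (k * j + r) + 1 := by
    have h1 := hsort'.1 a List.mem_cons_self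
    rw [ord_true] at h1
    exact h1
  have hlb : 2 * (k * (j - 1) + r) + 1 ≤ ord a := by
    have hch := (List.isChain_cons.mp hchain).1 a (by simp)
    by_contra hcon
    push_neg at hcon
    have h1 : ord a ≤ 2 * (k * (j - 1) + r) := by omega
    have h2 := hch (j - 1) h1
    rw [ord_true] at h2
    omega
  refine ⟨a, rfl, htB, ?_⟩
  obtain ⟨av, ab⟩ := a
  cases ab with
  | false =>
    rw [ord_false] at hub hlb
    exact Or.inr ⟨av, rfl, by omega, by omega⟩
  | true =>
    left
    have hmoda : av % k = r % k :=
      hmod (av, true) (List.mem_cons_of_mem _ List.mem_cons_self) rfl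
    have hmodb : (k * (j - 1) + r) % k = r % k := Nat.mul_add_mod k (j - 1) r
    rw [ord_true] at hub hlb
    have hba : k * (j - 1) + r ≤ av := by omega
    have hav : av ≠ k * j + r := by
      intro h
      exact hct (by rw [← h]; exact List.mem_cons_self)
    have havlt : av < k * (j - 1) + r + k := by omega
    have hdvd : k ∣ av - (k * (j - 1) + r) :=
      (Nat.modEq_iff_dvd' hba).mp (by unfold Nat.ModEq; omega)
    have h0 : av - (k * (j - 1) + r) = 0 := by
      by_contra h
      have h3 := Nat.le_of_dvd (Nat.pos_of_ne_zero h) hdvd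
      omega
    have hEq : av = k * (j - 1) + r := by omega
    simp [hEq]

end Comb

open MvPowerSeries in
/-- for m ≥ 1 and j ≥ 1,
g_{k,r}(m+1, overline(kj+r)) = q^{kj+r} · ( g_{k,r}(m, overline(k(j-1)+r))
  + ∑_{s=-k+r+1}^{r} g_{k,r}(m, kj+s) ). -/
theorem stmt14 (k r m j : ℕ) (hr : 1 ≤ r) (hrk : r ≤ k) (hm : 1 ≤ m)
    (hj : 1 ≤ j) :
    gkr k r (m + 1) (k * j + r, true) =
      (X 2 : S3) ^ (k * j + r) *
        (gkr k r m (k * (j - 1) + r, true) +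
          ∑ v ∈ Finset.Icc (k * (j - 1) + r + 1) (k * j + r), gkr k r m (v, false)) := by
  classical
  set c := k * j + r with hc
  set b := k * (j - 1) + r with hbdef
  set Ps : Finset (ℕ × Bool) :=
    insert (b, true) ((Finset.Icc (b + 1) c).image (fun v => (v, false))) with hPsdef
  have hPs : ∀ p, p ∈ Ps ↔ Good k r j p := by
    intro p
    simp only [hPsdef, Finset.mem_insert, Finset.mem_image, Finset.mem_Icc, Good]
    constructor
    · rintro (rfl | ⟨v, ⟨h1, h2⟩, rfl⟩)
      · exact Or.inl rfl
      · exact Or.inr ⟨v, rfl, h1, h2⟩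
    · rintro (rfl | ⟨v, rfl, h1, h2⟩)
      · exact Or.inl rfl
      · exact Or.inr ⟨v, ⟨h1, h2⟩, rfl⟩
  -- the equivalence
  let e : (Σ p : {x // x ∈ Ps},
      {t : List (ℕ × Bool) // IsBkr k r m t ∧ t.head? = some p.1}) ≃
      {l : List (ℕ × Bool) // IsBkr k r (m + 1) l ∧ l.head? = some (c, true)} := by
    refine Equiv.ofBijective
      (fun x => ⟨(c, true) :: x.2.1,
        cons_mem hr hrk hm hj x.2.2.1 x.2.2.2 ((hPs _).mp x.1.2), rfl⟩) ⟨?_, ?_⟩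
    · rintro ⟨⟨p, hp⟩, ⟨t, ht⟩⟩ ⟨⟨p', hp'⟩, ⟨t', ht'⟩⟩ hxy
      simp only [Subtype.mk.injEq, List.cons.injEq, true_and] at hxy
      subst hxy
      have hpp : p = p' := by simpa using ht.2.symm.trans ht'.2
      subst hpp
      rfl
    · rintro ⟨l, hl, hhd⟩
      obtain ⟨a, t, rfl⟩ : ∃ a t, l = a :: t := by
        cases l with
        | nil => simp at hhd
        | cons a t => exact ⟨a, t, rfl⟩
      have ha : a = (c, true) := by simpa using hhd
      subst ha
      obtain ⟨p, hp1, hp2, hp3⟩ := mem_decomp hr hrk hm hj hl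
      exact ⟨⟨⟨p, (hPs p).mpr hp3⟩, ⟨t, hp2, hp1⟩⟩, rfl⟩
  -- summability
  have hsum : ∀ p : {x // x ∈ Ps},
      Summable (fun t : {t : List (ℕ × Bool) // IsBkr k r m t ∧ t.head? = some p.1} =>
        (X 2 : S3) ^ (wtL t.1)) := by
    intro p
    refine summable_X2pow _ fun n => ?_
    refine ((finite_wt m n).preimage (Subtype.val_injective.injOn)).subset ?_
    intro t ht
    exact ⟨t.2.1.1, ht⟩
  have hfib : ∀ p : {x // x ∈ Ps},
      Summable (fun t : {t : List (ℕ × Bool) // IsBkr k r m t ∧ t.head? = some p.1} =>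
        (X 2 : S3) ^ (c + wtL t.1)) := by
    intro p
    refine summable_X2pow _ fun n => ?_
    refine ((finite_wt m (n - c)).preimage (Subtype.val_injective.injOn)).subset ?_
    intro t ht
    have hxx : c + wtL t.1 = n := ht
    refine ⟨t.2.1.1, ?_⟩
    show wtL t.1 = n - c
    omega
  have hginj : Function.Injective
      (fun x : (Σ p : {x // x ∈ Ps},
        {t : List (ℕ × Bool) // IsBkr k r m t ∧ t.head? = some p.1}) => x.2.1) := by
    rintro ⟨⟨p, hp⟩, ⟨t, ht⟩⟩ ⟨⟨p', hp'⟩, ⟨t', ht'⟩⟩ hxy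
    simp only at hxy
    subst hxy
    have hpp : p = p' := by simpa using ht.2.symm.trans ht'.2
    subst hpp
    rfl
  have hsigma : Summable (fun x : (Σ p : {x // x ∈ Ps},
      {t : List (ℕ × Bool) // IsBkr k r m t ∧ t.head? = some p.1}) =>
        (X 2 : S3) ^ (c + wtL x.2.1)) := by
    refine summable_X2pow _ fun n => ?_
    refine ((finite_wt m (n - c)).preimage (hginj.injOn)).subset ?_
    intro x hx
    have hxx : c + wtL x.2.1 = n := hx
    refine ⟨x.2.2.1.1, ?_⟩
    show wtL x.2.1 = n - c
    omega
  -- main computation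
  have h1 : gkr k r (m + 1) (c, true) =
      ∑' x : (Σ p : {x // x ∈ Ps},
        {t : List (ℕ × Bool) // IsBkr k r m t ∧ t.head? = some p.1}),
        (X 2 : S3) ^ (c + wtL x.2.1) := by
    rw [gkr, ← Equiv.tsum_eq e (fun l => (X 2 : S3) ^ wtL l.1)]
    refine tsum_congr fun x => ?_
    congr 1
  have h2 : ∑' x : (Σ p : {x // x ∈ Ps},
        {t : List (ℕ × Bool) // IsBkr k r m t ∧ t.head? = some p.1}),
        (X 2 : S3) ^ (c + wtL x.2.1) =
      ∑' p : {x // x ∈ Ps}, ∑' t : {t : List (ℕ × Bool) //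
        IsBkr k r m t ∧ t.head? = some p.1}, (X 2 : S3) ^ (c + wtL t.1) :=
    hsigma.tsum_sigma' hfib
  have h3 : ∀ p : {x // x ∈ Ps},
      (∑' t : {t : List (ℕ × Bool) // IsBkr k r m t ∧ t.head? = some p.1},
        (X 2 : S3) ^ (c + wtL t.1)) = (X 2 : S3) ^ c * gkr k r m p.1 := by
    intro p
    rw [gkr]
    rw [← (hsum p).tsum_mul_left ((X 2 : S3) ^ c)]
    refine tsum_congr fun t => ?_
    rw [← pow_add]
  have h4 : ∑' p : {x // x ∈ Ps}, ((X 2 : S3) ^ c * gkr k r m p.1) =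
      ∑ p ∈ Ps, (X 2 : S3) ^ c * gkr k r m p :=
    Finset.tsum_subtype Ps (fun p => (X 2 : S3) ^ c * gkr k r m p)
  have h5 : ∑ p ∈ Ps, (X 2 : S3) ^ c * gkr k r m p =
      (X 2 : S3) ^ c * (gkr k r m (b, true) +
        ∑ v ∈ Finset.Icc (b + 1) c, gkr k r m (v, false)) := by
    rw [← Finset.mul_sum]
    congr 1
    rw [hPsdef, Finset.sum_insert (by simp)]
    congr 1
    rw [Finset.sum_image (fun v _ v' _ h => by simpa using (Prod.mk.injEq _ _ _ _ ▸ h).1)]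
  rw [h1, h2, tsum_congr h3, h4]
  exact h5
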